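/- Let σ_t > 0, A₀ > 0, t > 0, let U be a real random variable with law N(0, σ_t²), and define h_g := A₀·exp(−2U²/t). Set ϱ := t/(4σ_t²). Then the law of h_g is absolutely continuous with respect to Lebesgue measure with density f(x) = (√ϱ/(√π·A₀)) · (x/A₀)^{ϱ−1} · (ln(A₀/x))^{−1/2} for 0 < x ≤ A₀, and f(x) = 0 otherwise. -/

import Mathlib

open Real MeasureTheory ProbabilityTheory Set
open scoped ENNReal NNReal

namespace GMLaux

lemma hasDerivAt_g (A₀ t : ℝ) (ht : 0 < t) (u : ℝ) :
    HasDerivAt (fun u : ℝ => A₀ * Real.exp (-2 * u ^ 2 / t))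
      (A₀ * (Real.exp (-2 * u ^ 2 / t) * (-4 * u / t))) u := by
  have h1 : HasDerivAt (fun u : ℝ => -2 * u ^ 2 / t) (-4 * u / t) u := by
    have h := ((hasDerivAt_pow 2 u).const_mul (-2 : ℝ)).div_const t
    refine h.congr_deriv ?_
    simp
    ring
  exact (h1.exp).const_mul A₀

lemma g_eval (A₀ t : ℝ) (hA₀ : 0 < A₀) (ht : 0 < t) {y : ℝ} (hy : 0 < y) (hyA : y ≤ A₀) :
    A₀ * Real.exp (-2 * (Real.sqrt (t / 2 * Real.log (A₀ / y))) ^ 2 / t) = y := by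
  have hlog : 0 ≤ Real.log (A₀ / y) :=
    Real.log_nonneg ((le_div_iff₀ hy).mpr (by linarith))
  have hsq : (Real.sqrt (t / 2 * Real.log (A₀ / y))) ^ 2 = t / 2 * Real.log (A₀ / y) :=
    Real.sq_sqrt (by positivity)
  rw [hsq, show -2 * (t / 2 * Real.log (A₀ / y)) / t = -Real.log (A₀ / y) by
    field_simp]
  rw [← Real.log_inv, Real.exp_log (by positivity)]
  field_simp

lemma pointwise (σt A₀ t : ℝ) (hσt : 0 < σt) (hA₀ : 0 < A₀) (ht : 0 < t)
    (ϱ : ℝ) (hϱ : ϱ = t / (4 * σt ^ 2)) {u : ℝ} (hu : 0 < u) :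
    |A₀ * (Real.exp (-2 * u ^ 2 / t) * (-4 * u / t))| *
      ((Real.sqrt ϱ / (Real.sqrt π * A₀)) * ((A₀ * Real.exp (-2 * u ^ 2 / t)) / A₀) ^ (ϱ - 1)
        * (Real.log (A₀ / (A₀ * Real.exp (-2 * u ^ 2 / t)))) ^ (-(1:ℝ) / 2))
    = 2 * gaussianPDFReal 0 (σt ^ 2).toNNReal u := by
  have hA : A₀ ≠ 0 := hA₀.ne'
  have hπ := Real.pi_pos
  set z : ℝ := -2 * u ^ 2 / t with hz
  have habs : |A₀ * (Real.exp z * (-4 * u / t))| = A₀ * Real.exp z * (4 * u / t) := by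
    rw [show A₀ * (Real.exp z * (-4 * u / t)) = -(A₀ * Real.exp z * (4 * u / t)) by ring,
      abs_neg, abs_of_pos (by positivity)]
  have hdiv : (A₀ * Real.exp z) / A₀ = Real.exp z := by field_simp
  have hlogarg : A₀ / (A₀ * Real.exp z) = Real.exp (-z) := by
    rw [Real.exp_neg]; field_simp
  have hpow : (Real.exp z) ^ (ϱ - 1) = Real.exp (z * (ϱ - 1)) := (Real.exp_mul z (ϱ - 1)).symm
  have hnz : -z = 2 * u ^ 2 / t := by rw [hz]; ring
  have hsq2t : Real.sqrt (2 * u ^ 2 / t) = Real.sqrt 2 * u / Real.sqrt t := by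
    rw [show 2 * u ^ 2 / t = (Real.sqrt 2 * u / Real.sqrt t) ^ 2 by
      rw [div_pow, mul_pow, Real.sq_sqrt (by norm_num : (0:ℝ) ≤ 2), Real.sq_sqrt ht.le],
      Real.sqrt_sq (by positivity)]
  have hrpow : (2 * u ^ 2 / t) ^ (-(1:ℝ) / 2) = (Real.sqrt 2 * u / Real.sqrt t)⁻¹ := by
    rw [show (-(1:ℝ) / 2) = -(1 / 2) by norm_num, Real.rpow_neg (by positivity),
      ← Real.sqrt_eq_rpow, hsq2t]
  have hsϱ : Real.sqrt ϱ = Real.sqrt t / (2 * σt) := by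
    rw [hϱ, show t / (4 * σt ^ 2) = (Real.sqrt t / (2 * σt)) ^ 2 by
      rw [div_pow, Real.sq_sqrt ht.le]; ring, Real.sqrt_sq (by positivity)]
  have hcoe : ((σt ^ 2).toNNReal : ℝ) = σt ^ 2 := Real.coe_toNNReal _ (by positivity)
  have hsqv : Real.sqrt (2 * π * σt ^ 2) = Real.sqrt 2 * Real.sqrt π * σt := by
    rw [show 2 * π * σt ^ 2 = (Real.sqrt 2 * Real.sqrt π * σt) ^ 2 by
      rw [mul_pow, mul_pow, Real.sq_sqrt (by norm_num : (0:ℝ) ≤ 2), Real.sq_sqrt hπ.le],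
      Real.sqrt_sq (by positivity)]
  have hexp : Real.exp z * Real.exp (z * (ϱ - 1)) = Real.exp (-(u - 0) ^ 2 / (2 * σt ^ 2)) := by
    rw [← Real.exp_add]
    congr 1
    rw [hz, hϱ]
    field_simp
    ring
  rw [habs, hdiv, hlogarg, hpow, Real.log_exp, hnz, hrpow, hsϱ,
    gaussianPDFReal, hcoe, hsqv, ← hexp]
  have h2 : Real.sqrt 2 ≠ 0 := by positivity
  have hp : Real.sqrt π ≠ 0 := by positivity
  have htt : Real.sqrt t ≠ 0 := by positivity
  field_simp
  ring_nf
  rw [Real.sq_sqrt ht.le]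

end GMLaux

/-- Eq. (35): the PDF of the GML `h_g = A₀ exp(−2U²/t)` for a scalar Gaussian misalignment
`U ~ N(0, σ_t²)`:  with `ϱ = t/(4σ_t²)`, the density is
`(√ϱ/(√π A₀)) (x/A₀)^{ϱ−1} (ln(A₀/x))^{−1/2}` on `(0, A₀]` and 0 otherwise. -/
theorem GML_pdf_scalar_misalignment {α : Type*} [MeasurableSpace α]
    (P : Measure α) [IsProbabilityMeasure P]
    (σt A₀ t : ℝ) (hσt : 0 < σt) (hA₀ : 0 < A₀) (ht : 0 < t)
    (U : α → ℝ) (hU : Measurable U)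
    (hlaw : Measure.map U P = gaussianReal 0 (σt ^ 2).toNNReal)
    (ϱ : ℝ) (hϱ : ϱ = t / (4 * σt ^ 2)) :
    Measure.map (fun ω => A₀ * Real.exp (-2 * (U ω) ^ 2 / t)) P
      = volume.withDensity (fun x => ENNReal.ofReal (
          if 0 < x ∧ x ≤ A₀ then
            (Real.sqrt ϱ / (Real.sqrt π * A₀)) * (x / A₀) ^ (ϱ - 1)
              * (Real.log (A₀ / x)) ^ (-(1:ℝ) / 2)
          else 0)) := by
  have hπ := Real.pi_pos
  set v : ℝ≥0 := (σt ^ 2).toNNReal with hvdef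
  have hvne : v ≠ 0 := by
    rw [hvdef, ← NNReal.coe_ne_zero, Real.coe_toNNReal _ (by positivity)]
    positivity
  set g : ℝ → ℝ := fun u => A₀ * Real.exp (-2 * u ^ 2 / t) with hgdef
  have hgmeas : Measurable g := by fun_prop
  set F : ℝ → ℝ≥0∞ := fun x => ENNReal.ofReal (
          if 0 < x ∧ x ≤ A₀ then
            (Real.sqrt ϱ / (Real.sqrt π * A₀)) * (x / A₀) ^ (ϱ - 1)
              * (Real.log (A₀ / x)) ^ (-(1:ℝ) / 2)
          else 0) with hFdef
  set μ : Measure ℝ := gaussianReal 0 v with hμdef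
  have hmap : Measure.map (fun ω => A₀ * Real.exp (-2 * (U ω) ^ 2 / t)) P
      = Measure.map g μ := by
    rw [← hlaw]
    exact (Measure.map_map hgmeas hU).symm
  rw [hmap]
  have hprob : IsProbabilityMeasure (Measure.map g μ) :=
    Measure.isProbabilityMeasure_map hgmeas.aemeasurable
  have hg_pos : ∀ u : ℝ, 0 < g u := fun u => by rw [hgdef]; positivity
  have hg_le : ∀ u : ℝ, g u ≤ A₀ := by
    intro u
    rw [hgdef]
    have h1 : Real.exp (-2 * u ^ 2 / t) ≤ 1 := by
      rw [show (1:ℝ) = Real.exp 0 by simp]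
      exact Real.exp_le_exp.mpr
        (div_nonpos_of_nonpos_of_nonneg (by nlinarith [sq_nonneg u]) ht.le)
    nlinarith
  have hmono : ∀ a b : ℝ, g a ≤ g b ↔ b ^ 2 ≤ a ^ 2 := by
    intro a b
    rw [hgdef]
    simp only
    rw [mul_le_mul_iff_right₀ hA₀, Real.exp_le_exp, div_le_div_iff_of_pos_right ht]
    constructor <;> intro h <;> nlinarith
  have hpt : ∀ a : ℝ, μ {a} = 0 := by
    intro a
    rw [hμdef, gaussianReal_apply 0 hvne]
    exact setLIntegral_measure_zero _ _ (measure_singleton a)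
  refine Measure.ext_of_Iic _ _ (fun x => ?_)
  rw [Measure.map_apply hgmeas measurableSet_Iic, withDensity_apply _ measurableSet_Iic]
  rcases le_or_gt x 0 with hx | hx
  · have h1 : g ⁻¹' (Iic x) = ∅ := by
      ext u
      simp only [mem_preimage, mem_Iic, mem_empty_iff_false, iff_false, not_le]
      exact lt_of_le_of_lt hx (hg_pos u)
    rw [h1, measure_empty]
    symm
    rw [setLIntegral_congr_fun measurableSet_Iic
      (fun y hy => ?_), lintegral_zero]
    rw [hFdef]
    have : ¬ (0 < y ∧ y ≤ A₀) := by
      rintro ⟨h1, -⟩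
      exact absurd (lt_of_lt_of_le h1 (le_trans hy hx)) (lt_irrefl 0)
    simp [this]
  · set x₀ : ℝ := min x A₀ with hx₀def
    have hx₀ : 0 < x₀ := lt_min hx hA₀
    have hx₀A : x₀ ≤ A₀ := min_le_right _ _
    set c : ℝ := Real.sqrt (t / 2 * Real.log (A₀ / x₀)) with hcdef
    have hc0 : 0 ≤ c := Real.sqrt_nonneg _
    have hgc : g c = x₀ := GMLaux.g_eval A₀ t hA₀ ht hx₀ hx₀A
    have habs2 : ∀ u : ℝ, c ^ 2 ≤ u ^ 2 ↔ (u ≤ -c ∨ c ≤ u) := by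
      intro u
      constructor
      · intro h
        by_contra hcon
        push_neg at hcon
        obtain ⟨h1, h2⟩ := hcon
        nlinarith
      · rintro (h | h) <;> nlinarith
    have hpre : g ⁻¹' (Iic x) = Iic (-c) ∪ Ici c := by
      ext u
      simp only [mem_preimage, mem_Iic, mem_union, mem_Ici]
      constructor
      · intro h
        have hle : g u ≤ x₀ := le_min h (hg_le u)
        rw [← hgc] at hle
        exact (habs2 u).mp ((hmono u c).mp hle)
      · intro h
        have : g u ≤ g c := (hmono u c).mpr ((habs2 u).mpr h)
        rw [hgc] at this
        exact le_trans this (min_le_left _ _)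
    have hsymm : μ (Iic (-c)) = μ (Ici c) := by
      have hmapneg : μ.map (fun u : ℝ => (-1) * u) = μ := by
        rw [hμdef, gaussianReal_map_const_mul]
        norm_num
      calc μ (Iic (-c)) = (μ.map (fun u : ℝ => (-1) * u)) (Iic (-c)) := by rw [hmapneg]
        _ = μ ((fun u : ℝ => (-1) * u) ⁻¹' (Iic (-c))) :=
            Measure.map_apply (by fun_prop) measurableSet_Iic
        _ = μ (Ici c) := by
            congr 1
            ext u
            simp only [mem_preimage, mem_Iic, mem_Ici]
            constructor <;> intro <;> linarith
    have hIci : μ (Ici c) = μ (Ioi c) := by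
      refine le_antisymm ?_ (measure_mono Ioi_subset_Ici_self)
      calc μ (Ici c) = μ (Ioi c ∪ {c}) := by rw [Set.Ioi_union_left]
        _ ≤ μ (Ioi c) + μ {c} := measure_union_le _ _
        _ = μ (Ioi c) := by rw [hpt c, add_zero]
    have hunion : μ (Iic (-c) ∪ Ici c) = μ (Iic (-c)) + μ (Ici c) := by
      refine measure_union₀ measurableSet_Ici.nullMeasurableSet ?_
      have hsub : Iic (-c) ∩ Ici c ⊆ {c} := by
        intro u hu
        obtain ⟨h1, h2⟩ := hu
        simp only [mem_Iic] at h1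
        simp only [mem_Ici] at h2
        have hc' : c = 0 := le_antisymm (by linarith) hc0
        simp only [mem_singleton_iff]
        rw [hc'] at h1 h2 ⊢
        linarith
      exact measure_mono_null hsub (hpt c)
    -- left side
    rw [hpre, hunion, hsymm, hIci]
    -- right side: reduce to Ioo 0 x₀
    have hstep1 : ∫⁻ y in Iic x, F y = ∫⁻ y in Ioc 0 x₀, F y := by
      rw [← lintegral_indicator measurableSet_Iic, ← lintegral_indicator measurableSet_Ioc]
      congr 1
      funext y
      by_cases hy : y ∈ Ioc 0 x₀
      · rw [indicator_of_mem hy, indicator_of_mem (mem_Iic.mpr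
          (le_trans hy.2 (min_le_left _ _)))]
      · rw [indicator_of_notMem hy]
        by_cases hy2 : y ∈ Iic x
        · rw [indicator_of_mem hy2]
          have hcond : ¬ (0 < y ∧ y ≤ A₀) := by
            rintro ⟨h1, h2⟩
            exact hy ⟨h1, le_min (mem_Iic.mp hy2) h2⟩
          rw [hFdef]
          simp [hcond]
        · rw [indicator_of_notMem hy2]
    have hstep2 : ∫⁻ y in Ioc 0 x₀, F y = ∫⁻ y in Ioo 0 x₀, F y :=
      (setLIntegral_congr Ioo_ae_eq_Ioc).symm
    have himg : g '' (Ioi c) = Ioo 0 x₀ := by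
      ext y
      simp only [mem_image, mem_Ioi, mem_Ioo]
      constructor
      · rintro ⟨u, hu, rfl⟩
        refine ⟨hg_pos u, ?_⟩
        have : ¬ (g c ≤ g u) := by
          rw [hmono]
          intro h
          nlinarith
        rw [hgc] at this
        exact lt_of_not_ge this
      · rintro ⟨hy0, hyx₀⟩
        refine ⟨Real.sqrt (t / 2 * Real.log (A₀ / y)), ?_, ?_⟩
        · rw [hcdef]
          apply Real.sqrt_lt_sqrt
            (mul_nonneg (by positivity) (Real.log_nonneg ((le_div_iff₀ hx₀).mpr (by linarith))))
          have hlog : Real.log (A₀ / x₀) < Real.log (A₀ / y) :=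
            Real.log_lt_log (by positivity) (by
              apply div_lt_div_of_pos_left hA₀ hy0 hyx₀)
          nlinarith
        · exact GMLaux.g_eval A₀ t hA₀ ht hy0 (le_trans hyx₀.le hx₀A)
    have hderiv : ∀ u ∈ Ioi c, HasFDerivWithinAt g
        (ContinuousLinearMap.smulRight (1 : ℝ →L[ℝ] ℝ)
          (A₀ * (Real.exp (-2 * u ^ 2 / t) * (-4 * u / t)))) (Ioi c) u :=
      fun u _ => ((GMLaux.hasDerivAt_g A₀ t ht u).hasDerivWithinAt).hasFDerivWithinAt
    have hinj : InjOn g (Ioi c) := by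
      intro a ha b hb hab
      simp only [mem_Ioi] at ha hb
      have h1 : b ^ 2 ≤ a ^ 2 := (hmono a b).mp hab.le
      have h2 : a ^ 2 ≤ b ^ 2 := (hmono b a).mp hab.ge
      nlinarith
    have hCoV := lintegral_image_eq_lintegral_abs_det_fderiv_mul volume
      measurableSet_Ioi hderiv hinj F
    rw [himg] at hCoV
    have hstep3 : ∫⁻ u in Ioi c,
        ENNReal.ofReal |(ContinuousLinearMap.smulRight (1 : ℝ →L[ℝ] ℝ)
          (A₀ * (Real.exp (-2 * u ^ 2 / t) * (-4 * u / t)))).det| * F (g u)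
        = ∫⁻ u in Ioi c, 2 * gaussianPDF 0 v u := by
      refine setLIntegral_congr_fun measurableSet_Ioi
        (fun u hu => ?_)
      simp only [mem_Ioi] at hu
      have hu0 : 0 < u := lt_of_le_of_lt hc0 hu
      rw [ContinuousLinearMap.smulRight_one_eq_toSpanSingleton, ContinuousLinearMap.det_toSpanSingleton]
      have hcond : 0 < g u ∧ g u ≤ A₀ := ⟨hg_pos u, hg_le u⟩
      rw [hFdef]
      simp only [hgdef]
      rw [if_pos hcond]
      rw [← ENNReal.ofReal_mul (abs_nonneg _),
        GMLaux.pointwise σt A₀ t hσt hA₀ ht ϱ hϱ hu0,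
        ENNReal.ofReal_mul (by norm_num : (0:ℝ) ≤ 2), gaussianPDF]
      norm_num
      rfl
    have hstep4 : ∫⁻ u in Ioi c, 2 * gaussianPDF 0 v u = 2 * μ (Ioi c) := by
      rw [lintegral_const_mul' 2 _ (by norm_num), hμdef, gaussianReal_apply 0 hvne]
    rw [hstep1, hstep2]
    refine Eq.trans ?_ hCoV.symm
    refine Eq.trans ?_ hstep3.symm
    rw [hstep4, two_mul]
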